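/- For connected skew diagrams D and E = WOW satisfying Hypotheses (I)–(III), one has (D ∘_W E)^* = D^* ∘_{W^*} E^* as skew diagrams (up to translation); here the antipodal rotation E^* equals W^*O^*W^* and again satisfies Hypotheses (I)–(III). -/

import Mathlib

open scoped Classical

/-! # Skew diagrams, the composition `D ∘_W E`, and the hypotheses (I)–(V) -/

/-- A cell of the plane: (row, column), rows increasing southwards,
columns increasing eastwards. -/
abbrev Cell := ℤ × ℤ

/-- Translation of a diagram by a vector. -/
def translateD (v : Cell) (D : Finset Cell) : Finset Cell := D.image (fun c => c + v)

/-- A partition as a list: weakly decreasing, all parts positive. -/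
def IsPartitionList (l : List ℕ) : Prop := l.Pairwise (· ≥ ·) ∧ ∀ x ∈ l, 0 < x

/-- The cells of the skew diagram λ/μ: {(i,j) : 1 ≤ i ≤ ℓ(λ), μ_i < j ≤ λ_i}. -/
noncomputable def skewCells (lam mu : List ℕ) : Finset Cell :=
  (Finset.Icc (1 : ℤ) (lam.length : ℤ) ×ˢ Finset.Icc (1 : ℤ) ((lam.foldr max 0 : ℕ) : ℤ)).filter
    (fun c => ((mu.getD ((c.1 - 1).toNat) 0 : ℕ) : ℤ) < c.2 ∧
              c.2 ≤ ((lam.getD ((c.1 - 1).toNat) 0 : ℕ) : ℤ))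

/-- A finite set of cells is a skew diagram if, up to translation, it is of the form
λ/μ for partitions μ ⊆ λ. -/
def IsSkewDiagram (D : Finset Cell) : Prop :=
  ∃ (lam mu : List ℕ) (v : Cell), IsPartitionList lam ∧ IsPartitionList mu ∧
    (∀ i, mu.getD i 0 ≤ lam.getD i 0) ∧ D = translateD v (skewCells lam mu)

/-- Two cells are adjacent if they differ by (0,±1) or (±1,0). -/
def CellAdj (c c' : Cell) : Prop :=
  (c.1 = c'.1 ∧ (c.2 = c'.2 + 1 ∨ c.2 + 1 = c'.2)) ∨
  (c.2 = c'.2 ∧ (c.1 = c'.1 + 1 ∨ c.1 + 1 = c'.1))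

/-- A diagram is connected if it is nonempty and any two of its cells are joined by a
path of pairwise-adjacent cells of the diagram. -/
def IsConnectedDiagram (D : Finset Cell) : Prop :=
  D.Nonempty ∧ ∀ c ∈ D, ∀ c' ∈ D,
    Relation.ReflTransGen (fun a b => b ∈ D ∧ CellAdj a b) c c'

/-- The transpose of a diagram: reflection along the main diagonal. -/
def transposeD (D : Finset Cell) : Finset Cell := D.image (fun c => (c.2, c.1))

/-- The antipodal rotation of a diagram: rotation by 180 degrees. -/
def rotateD (D : Finset Cell) : Finset Cell := D.image (fun c => (-c.1, -c.2))

/-- The northeasternmost cell of a (nonempty connected) diagram: the easternmost cell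
of its northernmost row. -/
noncomputable def neCell (D : Finset Cell) : Cell :=
  let i := WithTop.untopD 0 ((D.image Prod.fst).min)
  (i, WithBot.unbotD 0 (((D.filter (fun c => c.1 = i)).image Prod.snd).max))

/-- The southwesternmost cell of a (nonempty connected) diagram: the westernmost cell
of its southernmost row. -/
noncomputable def swCell (D : Finset Cell) : Cell :=
  let i := WithBot.unbotD 0 ((D.image Prod.fst).max)
  (i, WithTop.untopD 0 (((D.filter (fun c => c.1 = i)).image Prod.snd).min))

/-- The copy `W_ne` of `W` in the top of `E`: the translateD of `W` taking the
northeasternmost cell of `W` to the northeasternmost cell of `E`. -/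
noncomputable def WneCopy (W E : Finset Cell) : Finset Cell :=
  translateD (neCell E - neCell W) W

/-- The copy `W_sw` of `W` in the bottom of `E`: the translateD of `W` taking the
southwesternmost cell of `W` to the southwesternmost cell of `E`. -/
noncomputable def WswCopy (W E : Finset Cell) : Finset Cell :=
  translateD (swCell E - swCell W) W

/-- `W` lies in the top of `E`: `W` is empty, or `W` is a connected skew diagram whose
canonical copy containing the northeasternmost cell of `E` is contained in `E`. -/
def LiesInTop (W E : Finset Cell) : Prop :=
  W = ∅ ∨ (IsSkewDiagram W ∧ IsConnectedDiagram W ∧ WneCopy W E ⊆ E)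

/-- `W` lies in the bottom of `E`. -/
def LiesInBottom (W E : Finset Cell) : Prop :=
  W = ∅ ∨ (IsSkewDiagram W ∧ IsConnectedDiagram W ∧ WswCopy W E ⊆ E)

/-- `E = WOW`: `E` is a connected skew diagram and `W` lies in its top and bottom. -/
def IsWOW (E W : Finset Cell) : Prop :=
  IsSkewDiagram E ∧ IsConnectedDiagram E ∧ LiesInTop W E ∧ LiesInBottom W E

/-- The subdiagram `O` of `E = WOW`: the complement of the two copies of `W`. -/
noncomputable def Odiag (E W : Finset Cell) : Finset Cell :=
  E \ (WneCopy W E ∪ WswCopy W E)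

/-- The lower copy of `W` is horizontally attached to `O`. -/
def LowerHoriz (E W : Finset Cell) : Prop :=
  (((swCell (Odiag E W)).1, (swCell (Odiag E W)).2 - 1) : Cell) ∈ WswCopy W E

/-- The lower copy of `W` is vertically attached to `O`. -/
def LowerVert (E W : Finset Cell) : Prop :=
  (((swCell (Odiag E W)).1 + 1, (swCell (Odiag E W)).2) : Cell) ∈ WswCopy W E

/-- The upper copy of `W` is horizontally attached to `O`. -/
def UpperHoriz (E W : Finset Cell) : Prop :=
  (((neCell (Odiag E W)).1, (neCell (Odiag E W)).2 + 1) : Cell) ∈ WneCopy W E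

/-- The upper copy of `W` is vertically attached to `O`. -/
def UpperVert (E W : Finset Cell) : Prop :=
  (((neCell (Odiag E W)).1 - 1, (neCell (Odiag E W)).2) : Cell) ∈ WneCopy W E

/-- Case (a): both copies of `W` are horizontally attached to `O`
(the case `W = ∅` is regarded as case (a)). -/
def CaseA (E W : Finset Cell) : Prop :=
  W = ∅ ∨ (LowerHoriz E W ∧ UpperHoriz E W)

/-- Case (b): both copies of `W` are vertically attached to `O`. -/
def CaseB (E W : Finset Cell) : Prop :=
  W ≠ ∅ ∧ LowerVert E W ∧ UpperVert E W

/-- Case (c): the lower copy of `W` is horizontally attached and the upper copy is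
vertically attached to `O`. -/
def CaseC (E W : Finset Cell) : Prop :=
  W ≠ ∅ ∧ LowerHoriz E W ∧ UpperVert E W

/-- Case (d): the lower copy of `W` is vertically attached and the upper copy is
horizontally attached to `O`. -/
def CaseD (E W : Finset Cell) : Prop :=
  W ≠ ∅ ∧ LowerVert E W ∧ UpperHoriz E W

/-- The shift vector of the amalgamation `E ⨿_W E`: the translation taking the bottom
copy of `W` to the top copy of `W` (for `W = ∅`, the translation placing the
southwesternmost cell of the second copy one position east of the northeasternmost
cell of the first copy). -/
noncomputable def amalgShift (E W : Finset Cell) : Cell :=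
  if W = ∅ then neCell E + (0, 1) - swCell E
  else (neCell E - neCell W) - (swCell E - swCell W)

/-- `E^{⨿_W r}`: the r-fold left-associated amalgamation of `E` with itself along `W`,
with `E^{⨿_W 0} := W`. -/
noncomputable def amalgPow (E W : Finset Cell) (r : ℕ) : Finset Cell :=
  if r = 0 then W
  else (Finset.range r).biUnion (fun k =>
    translateD ((k : ℤ) * (amalgShift E W).1, (k : ℤ) * (amalgShift E W).2) E)

/-- The number of cells of `D` strictly northwest of `c` on the diagonal of `c`;
for a skew diagram this is the index of the ribbon of the northwest ribbon
decomposition on which `c` lies. -/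
def depthNW (D : Finset Cell) (c : Cell) : ℕ :=
  (D.filter (fun c' => c'.2 - c'.1 = c.2 - c.1 ∧ c'.1 < c.1)).card

/-- The number of cells of `D` strictly southeast of `c` on the diagonal of `c`;
for a skew diagram this is the index of the ribbon of the southeast ribbon
decomposition on which `c` lies. -/
def depthSE (D : Finset Cell) (c : Cell) : ℕ :=
  (D.filter (fun c' => c'.2 - c'.1 = c.2 - c.1 ∧ c.1 < c'.1)).card

/-- The translation vector of the copy `E_d` of `E` in `D ∘_W E` corresponding to the
cell `d` of `D`.  Writing `u` for the amalgamation shift, in cases (a)/(b) one has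
`v(d) = (content of d)·u ± (row of d)·(1,1)`, and in cases (c)/(d) one has
`v(d) = (content of d)·u ± (ribbon index of d)·(1,1)`; this encodes exactly the
placement rules of the composition. -/
noncomputable def placeVec (D E W : Finset Cell) (d : Cell) : Cell :=
  let u := amalgShift E W
  let k : ℤ :=
    if CaseA E W then d.1
    else if CaseB E W then -d.1
    else if CaseC E W then (depthNW D d : ℤ)
    else -(depthSE D d : ℤ)
  ((d.2 - d.1) * u.1 + k, (d.2 - d.1) * u.2 + k)

/-- The extra copies of `W` arising, in cases (c) and (d), from the pairs of vertically
adjacent cells of `D` lying on the same ribbon of the northwest (resp. southeast)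
ribbon decomposition: the extra copy lies one position southeast (resp. northwest) of
the identified copy of `W` in `E_d ⨿_W E_{d'}`. -/
noncomputable def extraWs (D E W : Finset Cell) : Finset Cell :=
  if CaseC E W then
    (D.filter (fun d => ((d.1 - 1, d.2) : Cell) ∈ D ∧
        depthNW D d = depthNW D (d.1 - 1, d.2))).biUnion
      (fun d => translateD (placeVec D E W d + (1, 1)) (WneCopy W E))
  else if CaseD E W then
    (D.filter (fun d => ((d.1 - 1, d.2) : Cell) ∈ D ∧
        depthSE D d = depthSE D (d.1 - 1, d.2))).biUnion
      (fun d => translateD (placeVec D E W d - (1, 1)) (WneCopy W E))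
  else ∅

/-- The composition `D ∘_W E`: the union of the copies `E_d` of `E` for the cells `d`
of `D`, placed according to the rules of the composition, together with (in cases (c)
and (d)) the extra copies of `W`; with the convention `∅ ∘_W E = W`. -/
noncomputable def composeWE (D E W : Finset Cell) : Finset Cell :=
  if D = ∅ then W
  else (D.biUnion (fun d => translateD (placeVec D E W d) E)) ∪ extraWs D E W

/-- The bi-infinite amalgamation `𝑬 = ⋯ ⨿_W E ⨿_W E ⨿_W ⋯` as a set of cells. -/
def bigE (E W : Finset Cell) : Set Cell :=
  {c | ∃ k : ℤ, (c.1 - k * (amalgShift E W).1, c.2 - k * (amalgShift E W).2) ∈ E}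

/-- The diagram `Ō` associated to a copy of `O`: the cells of the copy having the cell
one position southeast of them also in the copy. -/
noncomputable def oBar (E W : Finset Cell) : Finset Cell :=
  (Odiag E W).filter (fun c => ((c.1 + 1, c.2 + 1) : Cell) ∈ Odiag E W)

/-- The diagram `W̄` associated to a copy `W₁` of `W` in `𝑬`:
`{c ∈ 𝑬 : c+(1,1) ∈ W₁} ∪ {c ∈ W₁ : c+(1,1) ∈ 𝑬}` (computed here for the canonical
bottom copy of `W`). -/
noncomputable def wBar (E W : Finset Cell) : Finset Cell :=
  ((WswCopy W E).image (fun c => ((c.1 - 1, c.2 - 1) : Cell))).filter (fun c => c ∈ bigE E W)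
    ∪ (WswCopy W E).filter (fun c => (((c.1 + 1, c.2 + 1) : Cell)) ∈ bigE E W)

/-- Hypothesis (I): `W` is maximal, i.e. there is no skew diagram `W' ⊋ W` occupying
the same set of diagonals as `W` that also lies in the top and the bottom of `E`. -/
def HypI (E W : Finset Cell) : Prop :=
  ¬ ∃ W' : Finset Cell, IsSkewDiagram W' ∧ LiesInTop W' E ∧ LiesInBottom W' E ∧
      WneCopy W E ⊂ WneCopy W' E ∧ WswCopy W E ⊂ WswCopy W' E ∧
      (WneCopy W' E).image (fun c => c.2 - c.1) = (WneCopy W E).image (fun c => c.2 - c.1)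

/-- Hypothesis (II): `W_ne` and `W_sw` are separated by at least one diagonal. -/
def HypII (E W : Finset Cell) : Prop :=
  ∃ t : ℤ, (∀ x ∈ WswCopy W E, x.2 - x.1 < t) ∧ (∀ x ∈ WneCopy W E, t < x.2 - x.1)

/-- Hypothesis (III): the complement in `E` of either copy of `W` is a connected skew
diagram. -/
def HypIII (E W : Finset Cell) : Prop :=
  IsSkewDiagram (E \ WneCopy W E) ∧ IsConnectedDiagram (E \ WneCopy W E) ∧
  IsSkewDiagram (E \ WswCopy W E) ∧ IsConnectedDiagram (E \ WswCopy W E)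

/-- Hypothesis (IV): in `𝑬`, no copy of `Ō` is adjacent to a copy of `W̄` (the copies
being the translates of the canonical ones by multiples of the amalgamation shift). -/
def HypIV (E W : Finset Cell) : Prop :=
  ∀ k l : ℤ, ∀ x ∈ oBar E W, ∀ y ∈ wBar E W,
    ¬ CellAdj
      (x.1 + k * (amalgShift E W).1, x.2 + k * (amalgShift E W).2)
      (y.1 + l * (amalgShift E W).1, y.2 + l * (amalgShift E W).2)

/-- Hypothesis (V): if `E` is in case (a) or case (b), then at least one copy of `W`
in `E` has exactly one cell adjacent to `O`. -/
def HypV (E W : Finset Cell) : Prop :=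
  (CaseA E W ∨ CaseB E W) →
    ((WneCopy W E).filter (fun x => ∃ y ∈ Odiag E W, CellAdj x y)).card = 1 ∨
    ((WswCopy W E).filter (fun x => ∃ y ∈ Odiag E W, CellAdj x y)).card = 1

section Basics

@[simp] lemma mem_translateD {v : Cell} {X : Finset Cell} {x : Cell} :
    x ∈ translateD v X ↔ x - v ∈ X := by
  simp only [translateD, Finset.mem_image]
  constructor
  · rintro ⟨a, ha, rfl⟩; simpa using ha
  · intro h; exact ⟨x - v, h, by abel⟩

@[simp] lemma mem_rotateD {X : Finset Cell} {x : Cell} :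
    x ∈ rotateD X ↔ ((-x.1, -x.2) : Cell) ∈ X := by
  simp only [rotateD, Finset.mem_image]
  constructor
  · rintro ⟨a, ha, rfl⟩; simpa using ha
  · intro h; exact ⟨(-x.1, -x.2), h, by simp⟩

@[simp] lemma rotateD_empty : rotateD (∅ : Finset Cell) = ∅ := by
  ext x; simp

@[simp] lemma translateD_empty (v : Cell) : translateD v (∅ : Finset Cell) = ∅ := by
  ext x; simp

@[simp] lemma rotateD_rotateD (X : Finset Cell) : rotateD (rotateD X) = X := by
  ext x; simp

@[simp] lemma translateD_zero (X : Finset Cell) : translateD (0, 0) X = X := by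
  ext x; simp only [mem_translateD]; rw [show ((0, 0) : Cell) = 0 from rfl, sub_zero]

lemma translateD_translateD (v w : Cell) (X : Finset Cell) :
    translateD v (translateD w X) = translateD (v + w) X := by
  ext x; simp only [mem_translateD, sub_sub]

lemma rotateD_translateD (v : Cell) (X : Finset Cell) :
    rotateD (translateD v X) = translateD (-v) (rotateD X) := by
  ext x
  simp only [mem_rotateD, mem_translateD]
  constructor <;> { intro h; convert h using 2 <;> simp [Prod.ext_iff] <;> ring_nf }

lemma rotateD_eq_empty_iff {X : Finset Cell} : rotateD X = ∅ ↔ X = ∅ :=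
  Finset.image_eq_empty

lemma translateD_eq_empty_iff {v : Cell} {X : Finset Cell} :
    translateD v X = ∅ ↔ X = ∅ :=
  Finset.image_eq_empty

lemma rotateD_nonempty {X : Finset Cell} (h : X.Nonempty) : (rotateD X).Nonempty :=
  h.image _

lemma translateD_nonempty {v : Cell} {X : Finset Cell} (h : X.Nonempty) :
    (translateD v X).Nonempty := h.image _

lemma rotateD_subset {X Y : Finset Cell} (h : X ⊆ Y) : rotateD X ⊆ rotateD Y := by
  intro x hx; rw [mem_rotateD] at *; exact h hx

lemma rotateD_subset_iff {X Y : Finset Cell} : rotateD X ⊆ rotateD Y ↔ X ⊆ Y := by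
  constructor
  · intro h x hx
    have hx' : ((-x.1, -x.2) : Cell) ∈ rotateD X := by simp [hx]
    have := h hx'
    simpa using this
  · exact rotateD_subset

lemma rotateD_ssubset {X Y : Finset Cell} (h : X ⊂ Y) : rotateD X ⊂ rotateD Y := by
  rw [Finset.ssubset_iff_subset_ne] at *
  refine ⟨rotateD_subset h.1, fun he => h.2 ?_⟩
  have := congrArg rotateD he; simpa using this

lemma rotateD_union (X Y : Finset Cell) :
    rotateD (X ∪ Y) = rotateD X ∪ rotateD Y := by
  ext x; simp

lemma rotateD_sdiff (X Y : Finset Cell) :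
    rotateD (X \ Y) = rotateD X \ rotateD Y := by
  ext x; simp [Finset.mem_sdiff]

end Basics
section Corner

/-- `c` is the southwesternmost cell of `X`. -/
def IsSW (X : Finset Cell) (c : Cell) : Prop :=
  c ∈ X ∧ ∀ c' ∈ X, c'.1 ≤ c.1 ∧ (c'.1 = c.1 → c.2 ≤ c'.2)

/-- `c` is the northeasternmost cell of `X`. -/
def IsNE (X : Finset Cell) (c : Cell) : Prop :=
  c ∈ X ∧ ∀ c' ∈ X, c.1 ≤ c'.1 ∧ (c'.1 = c.1 → c'.2 ≤ c.2)

lemma IsSW.unique {X : Finset Cell} {c c' : Cell} (h : IsSW X c) (h' : IsSW X c') :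
    c = c' := by
  have h1 := (h.2 c' h'.1).1
  have h2 := (h'.2 c h.1).1
  have hr : c.1 = c'.1 := le_antisymm h2 h1
  have h3 := (h.2 c' h'.1).2 hr.symm
  have h4 := (h'.2 c h.1).2 hr
  exact Prod.ext hr (le_antisymm h3 h4)

lemma IsNE.unique {X : Finset Cell} {c c' : Cell} (h : IsNE X c) (h' : IsNE X c') :
    c = c' := by
  have h1 := (h.2 c' h'.1).1
  have h2 := (h'.2 c h.1).1
  have hr : c.1 = c'.1 := le_antisymm h1 h2
  have h3 := (h.2 c' h'.1).2 hr.symm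
  have h4 := (h'.2 c h.1).2 hr
  exact Prod.ext hr (le_antisymm h4 h3)

lemma swCell_isSW {X : Finset Cell} (h : X.Nonempty) : IsSW X (swCell X) := by
  classical
  have himg : (X.image Prod.fst).Nonempty := h.image _
  set i0 := (X.image Prod.fst).max' himg with hi0
  have hmax : (X.image Prod.fst).max = (i0 : WithBot ℤ) := (Finset.coe_max' himg).symm
  have hrow : WithBot.unbotD 0 ((X.image Prod.fst).max) = i0 := by rw [hmax]; rfl
  have hfil : (X.filter (fun c => c.1 = i0)).Nonempty := by
    obtain ⟨c, hc, hc1⟩ := Finset.mem_image.1 ((X.image Prod.fst).max'_mem himg)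
    exact ⟨c, Finset.mem_filter.2 ⟨hc, hc1⟩⟩
  have himg2 : ((X.filter (fun c => c.1 = i0)).image Prod.snd).Nonempty := hfil.image _
  set j0 := ((X.filter (fun c => c.1 = i0)).image Prod.snd).min' himg2 with hj0
  have hmin : ((X.filter (fun c => c.1 = i0)).image Prod.snd).min = (j0 : WithTop ℤ) :=
    (Finset.coe_min' himg2).symm
  have hsw : swCell X = (i0, j0) := by
    rw [swCell]; simp only [hmax, WithBot.unbotD_coe, hmin, WithTop.untopD_coe]
  rw [hsw]
  constructor
  · obtain ⟨c, hc, hc2⟩ := Finset.mem_image.1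
      (Finset.min'_mem _ himg2)
    obtain ⟨hcX, hc1⟩ := Finset.mem_filter.1 hc
    have : c = (i0, j0) := Prod.ext hc1 hc2
    rwa [← this]
  · intro c' hc'
    constructor
    · exact Finset.le_max' _ _ (Finset.mem_image_of_mem _ hc')
    · intro hc1
      exact Finset.min'_le _ _ (Finset.mem_image_of_mem _ (Finset.mem_filter.2 ⟨hc', hc1⟩))

lemma neCell_isNE {X : Finset Cell} (h : X.Nonempty) : IsNE X (neCell X) := by
  classical
  have himg : (X.image Prod.fst).Nonempty := h.image _
  set i0 := (X.image Prod.fst).min' himg with hi0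
  have hmin : (X.image Prod.fst).min = (i0 : WithTop ℤ) := (Finset.coe_min' himg).symm
  have hrow : WithTop.untopD 0 ((X.image Prod.fst).min) = i0 := by rw [hmin]; rfl
  have hfil : (X.filter (fun c => c.1 = i0)).Nonempty := by
    obtain ⟨c, hc, hc1⟩ := Finset.mem_image.1 ((X.image Prod.fst).min'_mem himg)
    exact ⟨c, Finset.mem_filter.2 ⟨hc, hc1⟩⟩
  have himg2 : ((X.filter (fun c => c.1 = i0)).image Prod.snd).Nonempty := hfil.image _
  set j0 := ((X.filter (fun c => c.1 = i0)).image Prod.snd).max' himg2 with hj0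
  have hmax : ((X.filter (fun c => c.1 = i0)).image Prod.snd).max = (j0 : WithBot ℤ) :=
    (Finset.coe_max' himg2).symm
  have hne : neCell X = (i0, j0) := by
    rw [neCell]; simp only [hmin, WithTop.untopD_coe, hmax, WithBot.unbotD_coe]
  rw [hne]
  constructor
  · obtain ⟨c, hc, hc2⟩ := Finset.mem_image.1
      (Finset.max'_mem _ himg2)
    obtain ⟨hcX, hc1⟩ := Finset.mem_filter.1 hc
    have : c = (i0, j0) := Prod.ext hc1 hc2
    rwa [← this]
  · intro c' hc'
    constructor
    · exact Finset.min'_le _ _ (Finset.mem_image_of_mem _ hc')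
    · intro hc1
      exact Finset.le_max' _ _ (Finset.mem_image_of_mem _ (Finset.mem_filter.2 ⟨hc', hc1⟩))

lemma IsSW.eq_swCell {X : Finset Cell} {c : Cell} (h : IsSW X c) : c = swCell X :=
  h.unique (swCell_isSW ⟨c, h.1⟩)

lemma IsNE.eq_neCell {X : Finset Cell} {c : Cell} (h : IsNE X c) : c = neCell X :=
  h.unique (neCell_isNE ⟨c, h.1⟩)

lemma swCell_mem {X : Finset Cell} (h : X.Nonempty) : swCell X ∈ X := (swCell_isSW h).1
lemma neCell_mem {X : Finset Cell} (h : X.Nonempty) : neCell X ∈ X := (neCell_isNE h).1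

@[simp] lemma swCell_empty : swCell (∅ : Finset Cell) = (0, 0) := by
  rfl

@[simp] lemma neCell_empty : neCell (∅ : Finset Cell) = (0, 0) := by
  rfl

lemma IsNE.rot {X : Finset Cell} {c : Cell} (h : IsNE X c) :
    IsSW (rotateD X) (-c.1, -c.2) := by
  constructor
  · simp only [mem_rotateD, neg_neg]; exact h.1
  · intro c' hc'
    rw [mem_rotateD] at hc'
    have := h.2 _ hc'
    exact ⟨by simpa using neg_le_neg this.1, fun he => by
      have := this.2 (by omega); simp; omega⟩

lemma IsSW.rot {X : Finset Cell} {c : Cell} (h : IsSW X c) :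
    IsNE (rotateD X) (-c.1, -c.2) := by
  constructor
  · simp only [mem_rotateD, neg_neg]; exact h.1
  · intro c' hc'
    rw [mem_rotateD] at hc'
    have := h.2 _ hc'
    exact ⟨by simpa using neg_le_neg this.1, fun he => by
      have := this.2 (by omega); simp; omega⟩

lemma swCell_rotateD (X : Finset Cell) : swCell (rotateD X) = (-(neCell X).1, -(neCell X).2) := by
  rcases X.eq_empty_or_nonempty with rfl | h
  · simp
  · exact ((neCell_isNE h).rot.eq_swCell).symm

lemma neCell_rotateD (X : Finset Cell) : neCell (rotateD X) = (-(swCell X).1, -(swCell X).2) := by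
  rcases X.eq_empty_or_nonempty with rfl | h
  · simp
  · exact ((swCell_isSW h).rot.eq_neCell).symm

lemma IsSW.translate {X : Finset Cell} {c : Cell} (h : IsSW X c) (v : Cell) :
    IsSW (translateD v X) (c + v) := by
  constructor
  · rw [mem_translateD]; simpa using h.1
  · intro c' hc'
    rw [mem_translateD] at hc'
    have := h.2 _ hc'
    rcases this with ⟨h1, h2⟩
    constructor
    · simp only [Prod.fst_add]
      have : c'.1 - v.1 ≤ c.1 := by simpa using h1
      omega
    · intro he
      have h2' := h2 (by simp only [Prod.fst_add] at he; simp; omega)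
      simp only [Prod.snd_add]
      have : c.2 ≤ c'.2 - v.2 := by simpa using h2'
      omega

lemma IsNE.translate {X : Finset Cell} {c : Cell} (h : IsNE X c) (v : Cell) :
    IsNE (translateD v X) (c + v) := by
  constructor
  · rw [mem_translateD]; simpa using h.1
  · intro c' hc'
    rw [mem_translateD] at hc'
    have := h.2 _ hc'
    rcases this with ⟨h1, h2⟩
    constructor
    · simp only [Prod.fst_add]
      have : c.1 ≤ c'.1 - v.1 := by simpa using h1
      omega
    · intro he
      have h2' := h2 (by simp only [Prod.fst_add] at he; simp; omega)
      simp only [Prod.snd_add]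
      have : c'.2 - v.2 ≤ c.2 := by simpa using h2'
      omega

lemma swCell_translateD {X : Finset Cell} (h : X.Nonempty) (v : Cell) :
    swCell (translateD v X) = swCell X + v :=
  (((swCell_isSW h).translate v).eq_swCell).symm

lemma neCell_translateD {X : Finset Cell} (h : X.Nonempty) (v : Cell) :
    neCell (translateD v X) = neCell X + v :=
  (((neCell_isNE h).translate v).eq_neCell).symm

end Corner
section SkewBasics

lemma getD_le_foldr_max (l : List ℕ) (n : ℕ) : l.getD n 0 ≤ l.foldr max 0 := by
  induction l generalizing n with
  | nil => simp [List.getD]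
  | cons a t ih =>
    cases n with
    | zero => simpa using Nat.le_max_left a (t.foldr max 0)
    | succ n =>
      have := ih n
      simp only [List.getD_cons_succ, List.foldr_cons]
      exact le_trans this (Nat.le_max_right _ _)

lemma partition_getD_antitone {l : List ℕ} (hl : l.Pairwise (· ≥ ·)) {a b : ℕ}
    (h : a ≤ b) : l.getD b 0 ≤ l.getD a 0 := by
  rcases lt_or_ge b l.length with hb | hb
  · rw [List.getD_eq_getElem _ _ hb, List.getD_eq_getElem _ _ (lt_of_le_of_lt h hb)]
    rcases eq_or_lt_of_le h with rfl | hab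
    · exact le_refl _
    · exact List.pairwise_iff_getElem.mp hl a b _ _ hab
  · rw [List.getD_eq_default _ _ hb]
    exact Nat.zero_le _

lemma mem_skewCells {lam mu : List ℕ} {c : Cell} :
    c ∈ skewCells lam mu ↔ 1 ≤ c.1 ∧ c.1 ≤ (lam.length : ℤ) ∧
      ((mu.getD ((c.1 - 1).toNat) 0 : ℕ) : ℤ) < c.2 ∧
      c.2 ≤ ((lam.getD ((c.1 - 1).toNat) 0 : ℕ) : ℤ) := by
  simp only [skewCells, Finset.mem_filter, Finset.mem_product, Finset.mem_Icc]
  constructor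
  · tauto
  · rintro ⟨h1, h2, h3, h4⟩
    have hmu : (0 : ℤ) ≤ ((mu.getD ((c.1 - 1).toNat) 0 : ℕ) : ℤ) := Int.ofNat_nonneg _
    have hfold := getD_le_foldr_max lam ((c.1 - 1).toNat)
    have hfold' : ((lam.getD ((c.1 - 1).toNat) 0 : ℕ) : ℤ) ≤ ((lam.foldr max 0 : ℕ) : ℤ) := by
      exact_mod_cast hfold
    exact ⟨⟨⟨h1, h2⟩, by omega, by omega⟩, h3, h4⟩

lemma IsSkewDiagram.translate {S : Finset Cell} (h : IsSkewDiagram S) (v : Cell) :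
    IsSkewDiagram (translateD v S) := by
  obtain ⟨lam, mu, w, hlam, hmu, hle, rfl⟩ := h
  exact ⟨lam, mu, v + w, hlam, hmu, hle, by rw [translateD_translateD, add_comm]⟩

/-- Corner lemma: north and east neighbours in a skew diagram force the cell itself. -/
lemma skew_corner_ne {S : Finset Cell} (hS : IsSkewDiagram S) {c : Cell}
    (h1 : ((c.1 - 1, c.2) : Cell) ∈ S) (h2 : ((c.1, c.2 + 1) : Cell) ∈ S) : c ∈ S := by
  obtain ⟨lam, mu, v, hlam, hmu, hle, rfl⟩ := hS
  rw [mem_translateD] at *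
  rw [mem_skewCells] at *
  simp only [Prod.fst_sub, Prod.snd_sub] at *
  obtain ⟨a1, a2, a3, a4⟩ := h1
  obtain ⟨b1, b2, b3, b4⟩ := h2
  have hmono : mu.getD ((c.1 - v.1 - 1).toNat) 0 ≤ mu.getD ((c.1 - 1 - v.1 - 1).toNat) 0 :=
    partition_getD_antitone hmu.1 (by omega)
  refine ⟨by omega, by omega, by omega, by omega⟩

/-- Corner lemma: west and south neighbours in a skew diagram force the cell itself. -/
lemma skew_corner_sw {S : Finset Cell} (hS : IsSkewDiagram S) {c : Cell}
    (h1 : ((c.1, c.2 - 1) : Cell) ∈ S) (h2 : ((c.1 + 1, c.2) : Cell) ∈ S) : c ∈ S := by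
  obtain ⟨lam, mu, v, hlam, hmu, hle, rfl⟩ := hS
  rw [mem_translateD] at *
  rw [mem_skewCells] at *
  simp only [Prod.fst_sub, Prod.snd_sub] at *
  obtain ⟨a1, a2, a3, a4⟩ := h1
  obtain ⟨b1, b2, b3, b4⟩ := h2
  have hmono : lam.getD ((c.1 + 1 - v.1 - 1).toNat) 0 ≤ lam.getD ((c.1 - v.1 - 1).toNat) 0 :=
    partition_getD_antitone hlam.1 (by omega)
  refine ⟨by omega, by omega, by omega, by omega⟩

/-- In a skew diagram, the content of any cell is at most the content of the
northeasternmost cell. -/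
lemma content_le_neCell {S : Finset Cell} (hS : IsSkewDiagram S) (hne : S.Nonempty)
    {c : Cell} (hc : c ∈ S) :
    c.2 - c.1 ≤ (neCell S).2 - (neCell S).1 := by
  obtain ⟨lam, mu, v, hlam, hmu, hle, rfl⟩ := hS
  have hspec := neCell_isNE hne
  set q := neCell (translateD v (skewCells lam mu)) with hqdef
  have hq := hspec.1
  have hrow := (hspec.2 c hc).1
  rw [mem_translateD, mem_skewCells] at hq hc
  simp only [Prod.fst_sub, Prod.snd_sub] at hq hc
  obtain ⟨q1, q2, q3, q4⟩ := hq
  obtain ⟨c1, c2, c3, c4⟩ := hc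
  -- the cell (q.1, lam_(q-row) + v.2) is in S, on the same row as q
  set L : ℕ := lam.getD ((q.1 - v.1 - 1).toNat) 0 with hL
  have hb : ((q.1, (L : ℤ) + v.2) : Cell) ∈ translateD v (skewCells lam mu) := by
    rw [mem_translateD, mem_skewCells]
    simp only [Prod.fst_sub, Prod.snd_sub]
    refine ⟨q1, q2, by omega, by omega⟩
  have hcol := (hspec.2 _ hb).2 rfl
  simp only at hcol
  have hmono : lam.getD ((c.1 - v.1 - 1).toNat) 0 ≤ L :=
    partition_getD_antitone hlam.1 (by omega)
  omega

lemma content_le_neCell' {S : Finset Cell} (hS : IsSkewDiagram S) (hne : S.Nonempty) :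
    ∀ c ∈ S, c.2 - c.1 ≤ (neCell S).2 - (neCell S).1 :=
  fun _ hc => content_le_neCell hS hne hc

end SkewBasics
section RotateSkew

private def posb : ℕ → Bool := fun x => decide (0 < x)

lemma getD_zero_of_forall {l : List ℕ} (h : ∀ x ∈ l, x = 0) (k : ℕ) :
    l.getD k 0 = 0 := by
  rcases lt_or_ge k l.length with hk | hk
  · rw [List.getD_eq_getElem _ _ hk]; exact h _ (List.getElem_mem hk)
  · exact List.getD_eq_default _ _ hk

lemma takeWhile_pos_getD (l : List ℕ) (hs : l.Pairwise (· ≥ ·)) (k : ℕ) :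
    (l.takeWhile posb).getD k 0 = l.getD k 0 := by
  induction l generalizing k with
  | nil => simp
  | cons a t ih =>
    by_cases ha : 0 < a
    · rw [List.takeWhile_cons_of_pos (by simp [posb, ha])]
      cases k with
      | zero => simp
      | succ k => simpa using ih (List.pairwise_cons.mp hs).2 k
    · have ha0 : a = 0 := by omega
      rw [List.takeWhile_cons_of_neg (by simp [posb, ha])]
      have hall : ∀ x ∈ a :: t, x = 0 := by
        intro x hx
        rcases List.mem_cons.1 hx with rfl | hx
        · exact ha0
        · have := (List.pairwise_cons.mp hs).1 x hx
          omega
      rw [getD_zero_of_forall hall k]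
      simp

lemma lt_takeWhile_pos_length_iff (l : List ℕ) (hs : l.Pairwise (· ≥ ·)) (k : ℕ) :
    k < (l.takeWhile posb).length ↔ 0 < l.getD k 0 := by
  constructor
  · intro h
    rw [← takeWhile_pos_getD l hs k, List.getD_eq_getElem _ _ h]
    have := List.mem_takeWhile_imp (List.getElem_mem h)
    simpa [posb] using this
  · intro h
    by_contra hk
    push_neg at hk
    rw [← takeWhile_pos_getD l hs k, List.getD_eq_default _ _ hk] at h
    exact absurd h (by simp)

lemma map_range_getD (f : ℕ → ℕ) (n k : ℕ) :
    ((List.range n).map f).getD k 0 = if k < n then f k else 0 := by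
  split_ifs with h
  · rw [List.getD_eq_getElem _ _ (by simpa using h)]
    simp
  · exact List.getD_eq_default _ _ (by simpa using le_of_not_gt h)

lemma map_range_sorted (f : ℕ → ℕ) (hf : ∀ a b, a < b → f b ≤ f a) (n : ℕ) :
    ((List.range n).map f).Pairwise (· ≥ ·) := by
  rw [List.pairwise_map]
  exact (List.pairwise_lt_range (n := n)).imp (fun h => hf _ _ h)

private def FlD (M ℓ : ℕ) (mu : List ℕ) : ℕ → ℕ := fun k => M - mu.getD (ℓ - 1 - k) 0

lemma skewCells_nil (mu : List ℕ) : skewCells [] mu = ∅ := by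
  ext c; simp only [mem_skewCells, Finset.notMem_empty, iff_false]
  rintro ⟨h1, h2, -⟩
  simp at h2; omega

lemma IsSkewDiagram.rot {S : Finset Cell} (h : IsSkewDiagram S) :
    IsSkewDiagram (rotateD S) := by
  obtain ⟨lam, mu, v, hlam, hmu, hle, rfl⟩ := h
  rw [rotateD_translateD]
  refine IsSkewDiagram.translate ?_ (-v)
  rcases eq_or_ne lam [] with rfl | hne
  · rw [skewCells_nil, rotateD_empty]
    exact ⟨[], [], (0, 0), ⟨List.Pairwise.nil, by simp⟩, ⟨List.Pairwise.nil, by simp⟩,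
      fun i => le_refl _, by rw [translateD_zero, skewCells_nil]⟩
  · set ℓ : ℕ := lam.length with hl
    set M : ℕ := lam.getD 0 0 with hM
    have hℓpos : 0 < ℓ := by
      simp only [hl]
      exact List.length_pos_iff.mpr hne
    have hMpos : 0 < M := by
      have hmem : lam.getD 0 0 ∈ lam := by
        rw [List.getD_eq_getElem _ _ (by omega)]
        exact List.getElem_mem _
      exact hlam.2 _ hmem
    have hlamle : ∀ k, lam.getD k 0 ≤ M := fun k => partition_getD_antitone hlam.1 (Nat.zero_le k)
    have hmule : ∀ k, mu.getD k 0 ≤ M := fun k => le_trans (hle k) (hlamle k)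
    set Fl : ℕ → ℕ := FlD M ℓ mu with hFl
    set Gl : ℕ → ℕ := FlD M ℓ lam with hGl
    have hFanti : ∀ a b, a < b → Fl b ≤ Fl a := by
      intro a b hab
      have := partition_getD_antitone hmu.1 (show ℓ - 1 - b ≤ ℓ - 1 - a by omega)
      simp only [hFl, FlD]; omega
    have hGanti : ∀ a b, a < b → Gl b ≤ Gl a := by
      intro a b hab
      have := partition_getD_antitone hlam.1 (show ℓ - 1 - b ≤ ℓ - 1 - a by omega)
      simp only [hGl, FlD]; omega
    set mlF := (List.range ℓ).map Fl with hmlF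
    set mlG := (List.range ℓ).map Gl with hmlG
    have hFs : mlF.Pairwise (· ≥ ·) := map_range_sorted Fl hFanti ℓ
    have hGs : mlG.Pairwise (· ≥ ·) := map_range_sorted Gl hGanti ℓ
    set lam' := mlF.takeWhile posb with hlam'
    set mu' := mlG.takeWhile posb with hmu'
    have hlam'getD : ∀ k, lam'.getD k 0 = if k < ℓ then Fl k else 0 := by
      intro k; rw [hlam', takeWhile_pos_getD mlF hFs k, hmlF, map_range_getD]
    have hmu'getD : ∀ k, mu'.getD k 0 = if k < ℓ then Gl k else 0 := by
      intro k; rw [hmu', takeWhile_pos_getD mlG hGs k, hmlG, map_range_getD]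
    have hlam'len : ∀ k, k < lam'.length ↔ 0 < mlF.getD k 0 :=
      fun k => lt_takeWhile_pos_length_iff mlF hFs k
    have hlam'lenle : lam'.length ≤ ℓ := by
      have := (List.takeWhile_sublist posb (l := mlF)).length_le
      simpa [hmlF] using this
    refine ⟨lam', mu', ((-(ℓ : ℤ)) - 1, (-(M : ℤ)) - 1), ?_, ?_, ?_, ?_⟩
    · refine ⟨List.Pairwise.sublist (List.takeWhile_sublist _) hFs, fun x hx => ?_⟩
      have := List.mem_takeWhile_imp hx
      simpa [posb] using this
    · refine ⟨List.Pairwise.sublist (List.takeWhile_sublist _) hGs, fun x hx => ?_⟩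
      have := List.mem_takeWhile_imp hx
      simpa [posb] using this
    · intro k
      rw [hlam'getD k, hmu'getD k]
      split_ifs with h
      · simp only [hFl, hGl, FlD]
        have := hle (ℓ - 1 - k)
        omega
      · exact le_refl _
    · ext c
      rw [mem_rotateD, mem_translateD, mem_skewCells, mem_skewCells]
      simp only [Prod.fst_sub, Prod.snd_sub]
      constructor
      · rintro ⟨h1, h2, h3, h4⟩
        -- i := -c.1 ∈ [1, ℓ], j := -c.2
        have hidx : ((-c.1 - 1).toNat) = ℓ - 1 - (c.1 - (-(ℓ : ℤ) - 1) - 1).toNat := by omega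
        have hidx2 : (c.1 - (-(ℓ : ℤ) - 1) - 1).toNat < ℓ := by omega
        have hFval := hlam'getD ((c.1 - (-(ℓ : ℤ) - 1) - 1).toNat)
        have hGval := hmu'getD ((c.1 - (-(ℓ : ℤ) - 1) - 1).toNat)
        rw [if_pos hidx2] at hFval hGval
        have hlen : (c.1 - (-(ℓ : ℤ) - 1) - 1).toNat < lam'.length := by
          rw [hlam'len, hmlF, map_range_getD, if_pos hidx2]
          simp only [hFl, FlD]
          have h5 := hlamle (ℓ - 1 - (c.1 - (-(ℓ : ℤ) - 1) - 1).toNat)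
          rw [hidx] at h3 h4
          omega
        have hmuv := hmule (ℓ - 1 - (c.1 - (-(ℓ : ℤ) - 1) - 1).toNat)
        have hlamv := hlamle (ℓ - 1 - (c.1 - (-(ℓ : ℤ) - 1) - 1).toNat)
        rw [hidx] at h3 h4
        refine ⟨by omega, by omega, ?_, ?_⟩
        · rw [hGval]; simp only [hGl, FlD]; omega
        · rw [hFval]; simp only [hFl, FlD]; omega
      · rintro ⟨h1, h2, h3, h4⟩
        have hidx2 : (c.1 - (-(ℓ : ℤ) - 1) - 1).toNat < ℓ := by
          have : (c.1 - (-(ℓ : ℤ) - 1) - 1).toNat < lam'.length := by omega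
          omega
        have hidx : ((-c.1 - 1).toNat) = ℓ - 1 - (c.1 - (-(ℓ : ℤ) - 1) - 1).toNat := by omega
        have hFval := hlam'getD ((c.1 - (-(ℓ : ℤ) - 1) - 1).toNat)
        have hGval := hmu'getD ((c.1 - (-(ℓ : ℤ) - 1) - 1).toNat)
        rw [if_pos hidx2] at hFval hGval
        rw [hFval] at h4
        rw [hGval] at h3
        simp only [hFl, hGl, FlD] at h3 h4
        have hmuv := hmule (ℓ - 1 - (c.1 - (-(ℓ : ℤ) - 1) - 1).toNat)
        have hlamv := hlamle (ℓ - 1 - (c.1 - (-(ℓ : ℤ) - 1) - 1).toNat)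
        rw [hidx]
        refine ⟨by omega, by omega, by omega, by omega⟩

end RotateSkew
section Connectivity

lemma CellAdj.rot {a b : Cell} (h : CellAdj a b) :
    CellAdj (-a.1, -a.2) (-b.1, -b.2) := by
  unfold CellAdj at *
  rcases h with ⟨h1, h2⟩ | ⟨h1, h2⟩
  · left; constructor <;> simp <;> omega
  · right; constructor <;> simp <;> omega

lemma CellAdj.content {a b : Cell} (h : CellAdj a b) :
    b.2 - b.1 = a.2 - a.1 + 1 ∨ b.2 - b.1 = a.2 - a.1 - 1 := by
  unfold CellAdj at h
  rcases h with ⟨h1, h2⟩ | ⟨h1, h2⟩ <;> omega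

lemma rtg_rot {X : Finset Cell} {a b : Cell}
    (h : Relation.ReflTransGen (fun x y => y ∈ X ∧ CellAdj x y) a b) :
    Relation.ReflTransGen (fun x y => y ∈ rotateD X ∧ CellAdj x y)
      (-a.1, -a.2) (-b.1, -b.2) := by
  induction h with
  | refl => exact Relation.ReflTransGen.refl
  | tail h₁ h₂ ih =>
    exact ih.tail ⟨by simpa using h₂.1, h₂.2.rot⟩

lemma IsConnectedDiagram.rot {X : Finset Cell} (h : IsConnectedDiagram X) :
    IsConnectedDiagram (rotateD X) := by
  refine ⟨rotateD_nonempty h.1, fun c hc c' hc' => ?_⟩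
  rw [mem_rotateD] at hc hc'
  have := rtg_rot (h.2 _ hc _ hc')
  simpa using this

lemma rtg_mem {F : Finset Cell} {a b : Cell}
    (h : Relation.ReflTransGen (fun x y => y ∈ F ∧ CellAdj x y) a b) (ha : a ∈ F) :
    b ∈ F := by
  induction h with
  | refl => exact ha
  | tail h₁ h₂ ih => exact h₂.1

lemma crossing {F : Finset Cell} {P : Cell → Prop} {a c : Cell}
    (h : Relation.ReflTransGen (fun x y => y ∈ F ∧ CellAdj x y) a c)
    (ha : a ∈ F) (hPa : P a) (hPc : ¬ P c) :
    ∃ x ∈ F, ∃ y ∈ F, CellAdj x y ∧ P x ∧ ¬ P y := by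
  induction h with
  | refl => exact absurd hPa hPc
  | @tail b c h₁ h₂ ih =>
    by_cases hPb : P b
    · exact ⟨b, rtg_mem h₁ ha, c, h₂.1, h₂.2, hPb, hPc⟩
    · exact ih hPb

lemma content_ivt {F : Finset Cell} {a c : Cell} {t : ℤ}
    (h : Relation.ReflTransGen (fun x y => y ∈ F ∧ CellAdj x y) a c)
    (ha : a ∈ F) (h1 : a.2 - a.1 ≤ t) (h2 : t ≤ c.2 - c.1) :
    ∃ z ∈ F, z.2 - z.1 = t := by
  induction h with
  | refl => exact ⟨a, ha, by omega⟩
  | @tail b c h₁ h₂ ih =>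
    rcases le_or_gt t (b.2 - b.1) with hb | hb
    · exact ih hb
    · have := h₂.2.content
      exact ⟨c, h₂.1, by omega⟩

/-- The south-west corner lemma: a cell of a connected skew diagram with no west and
no south neighbour is the southwesternmost cell. -/
lemma sw_corner {F : Finset Cell} (hsk : IsSkewDiagram F) (hconn : IsConnectedDiagram F)
    {o : Cell} (ho : o ∈ F) (hw : ((o.1, o.2 - 1) : Cell) ∉ F)
    (hs : ((o.1 + 1, o.2) : Cell) ∉ F) : IsSW F o := by
  obtain ⟨lam, mu, v, hlam, hmu, hle, rfl⟩ := hsk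
  set F := translateD v (skewCells lam mu) with hF
  have hoo := ho
  rw [hF, mem_translateD, mem_skewCells] at hoo
  simp only [Prod.fst_sub, Prod.snd_sub] at hoo
  obtain ⟨o1, o2, o3, o4⟩ := hoo
  -- o is the westernmost cell of its row
  have hj : o.2 - v.2 = ((mu.getD (o.1 - v.1 - 1).toNat 0 : ℕ) : ℤ) + 1 := by
    by_contra hne
    apply hw
    rw [hF, mem_translateD, mem_skewCells]
    simp only [Prod.fst_sub, Prod.snd_sub]
    exact ⟨by omega, by omega, by omega, by omega⟩
  have hmono : mu.getD (o.1 + 1 - v.1 - 1).toNat 0 ≤ mu.getD (o.1 - v.1 - 1).toNat 0 :=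
    partition_getD_antitone hmu.1 (by omega)
  have hcase : (lam.length : ℤ) < o.1 - v.1 + 1 ∨
      ((lam.getD (o.1 + 1 - v.1 - 1).toNat 0 : ℕ) : ℤ) < o.2 - v.2 := by
    by_contra hcon
    push_neg at hcon
    apply hs
    rw [hF, mem_translateD, mem_skewCells]
    simp only [Prod.fst_sub, Prod.snd_sub]
    exact ⟨by omega, by omega, by omega, by omega⟩
  have hrow : ∀ z ∈ F, z.1 ≤ o.1 := by
    rcases hcase with hcase | hcase
    · intro z hz
      rw [hF, mem_translateD, mem_skewCells] at hz
      simp only [Prod.fst_sub, Prod.snd_sub] at hz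
      omega
    · intro z hz
      by_contra hgt
      push_neg at hgt
      obtain ⟨x, hxF, y, hyF, hadj, hPx, hPy⟩ :=
        crossing (P := fun w => w.1 ≤ o.1) (hconn.2 o ho z hz) ho (le_refl _) (by omega)
      push_neg at hPy
      have hxy : y.1 = x.1 + 1 ∧ y.2 = x.2 ∧ x.1 = o.1 := by
        unfold CellAdj at hadj
        rcases hadj with ⟨h1, h2⟩ | ⟨h1, h2⟩ <;> omega
      obtain ⟨e1, e2, e3⟩ := hxy
      rw [hF, mem_translateD, mem_skewCells] at hxF hyF
      simp only [Prod.fst_sub, Prod.snd_sub] at hxF hyF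
      have hxidx : (x.1 - v.1 - 1).toNat = (o.1 - v.1 - 1).toNat := by omega
      have hyidx : (y.1 - v.1 - 1).toNat = (o.1 + 1 - v.1 - 1).toNat := by omega
      rw [hxidx] at hxF
      rw [hyidx] at hyF
      omega
  refine ⟨ho, fun c hc => ⟨hrow c hc, fun he => ?_⟩⟩
  have hcc := hc
  rw [hF, mem_translateD, mem_skewCells] at hcc
  simp only [Prod.fst_sub, Prod.snd_sub] at hcc
  have hcidx : (c.1 - v.1 - 1).toNat = (o.1 - v.1 - 1).toNat := by omega
  rw [hcidx] at hcc
  omega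

/-- The north-east corner lemma, by rotation. -/
lemma ne_corner {F : Finset Cell} (hsk : IsSkewDiagram F) (hconn : IsConnectedDiagram F)
    {o : Cell} (ho : o ∈ F) (he : ((o.1, o.2 + 1) : Cell) ∉ F)
    (hn : ((o.1 - 1, o.2) : Cell) ∉ F) : IsNE F o := by
  have h1 : ((-o.1, -o.2) : Cell) ∈ rotateD F := by simpa using ho
  have h2 : (((-o.1 : ℤ), -o.2 - 1) : Cell) ∉ rotateD F := by
    rw [mem_rotateD]
    intro hcon
    apply he
    convert hcon using 2 <;> simp <;> ring
  have h3 : (((-o.1 : ℤ) + 1, -o.2) : Cell) ∉ rotateD F := by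
    rw [mem_rotateD]
    intro hcon
    apply hn
    convert hcon using 2 <;> simp <;> ring
  have := sw_corner hsk.rot hconn.rot h1 h2 h3
  have h4 : IsNE (rotateD (rotateD F)) (- -o.1, - -o.2) := this.rot
  simpa using h4

end Connectivity
section Copies

lemma WneCopy_rot (W E : Finset Cell) :
    WneCopy (rotateD W) (rotateD E) = rotateD (WswCopy W E) := by
  unfold WneCopy WswCopy
  rw [rotateD_translateD]
  congr 1
  rw [neCell_rotateD, neCell_rotateD]
  apply Prod.ext <;> simp <;> ring

lemma WswCopy_rot (W E : Finset Cell) :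
    WswCopy (rotateD W) (rotateD E) = rotateD (WneCopy W E) := by
  unfold WneCopy WswCopy
  rw [rotateD_translateD]
  congr 1
  rw [swCell_rotateD, swCell_rotateD]
  apply Prod.ext <;> simp <;> ring

lemma Odiag_rot (E W : Finset Cell) :
    Odiag (rotateD E) (rotateD W) = rotateD (Odiag E W) := by
  unfold Odiag
  rw [WneCopy_rot, WswCopy_rot, ← rotateD_union, ← rotateD_sdiff, Finset.union_comm]

@[simp] lemma WneCopy_empty (E : Finset Cell) : WneCopy ∅ E = ∅ := by
  unfold WneCopy; simp

@[simp] lemma WswCopy_empty (E : Finset Cell) : WswCopy ∅ E = ∅ := by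
  unfold WswCopy; simp

lemma LowerHoriz_rot (E W : Finset Cell) :
    LowerHoriz (rotateD E) (rotateD W) ↔ UpperHoriz E W := by
  unfold LowerHoriz UpperHoriz
  rw [Odiag_rot, WswCopy_rot, swCell_rotateD, mem_rotateD]
  constructor <;> intro h <;> convert h using 2 <;> simp <;> ring

lemma LowerVert_rot (E W : Finset Cell) :
    LowerVert (rotateD E) (rotateD W) ↔ UpperVert E W := by
  unfold LowerVert UpperVert
  rw [Odiag_rot, WswCopy_rot, swCell_rotateD, mem_rotateD]
  constructor <;> intro h <;> convert h using 2 <;> simp <;> ring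

lemma UpperHoriz_rot (E W : Finset Cell) :
    UpperHoriz (rotateD E) (rotateD W) ↔ LowerHoriz E W := by
  unfold LowerHoriz UpperHoriz
  rw [Odiag_rot, WneCopy_rot, neCell_rotateD, mem_rotateD]
  constructor <;> intro h <;> convert h using 2 <;> simp <;> ring

lemma UpperVert_rot (E W : Finset Cell) :
    UpperVert (rotateD E) (rotateD W) ↔ LowerVert E W := by
  unfold LowerVert UpperVert
  rw [Odiag_rot, WneCopy_rot, neCell_rotateD, mem_rotateD]
  constructor <;> intro h <;> convert h using 2 <;> simp <;> ring

lemma CaseA_rot (E W : Finset Cell) : CaseA (rotateD E) (rotateD W) ↔ CaseA E W := by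
  unfold CaseA
  rw [rotateD_eq_empty_iff, LowerHoriz_rot, UpperHoriz_rot, and_comm]

lemma CaseB_rot (E W : Finset Cell) : CaseB (rotateD E) (rotateD W) ↔ CaseB E W := by
  unfold CaseB
  rw [Ne, rotateD_eq_empty_iff, LowerVert_rot, UpperVert_rot, and_comm (a := UpperVert E W)]

lemma CaseC_rot (E W : Finset Cell) : CaseC (rotateD E) (rotateD W) ↔ CaseD E W := by
  unfold CaseC CaseD
  rw [Ne, rotateD_eq_empty_iff, LowerHoriz_rot, UpperVert_rot, and_comm (a := UpperHoriz E W)]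

lemma CaseD_rot (E W : Finset Cell) : CaseD (rotateD E) (rotateD W) ↔ CaseC E W := by
  unfold CaseC CaseD
  rw [Ne, rotateD_eq_empty_iff, LowerVert_rot, UpperHoriz_rot, and_comm (a := UpperVert E W)]

lemma amalgShift_rot (E W : Finset Cell) :
    amalgShift (rotateD E) (rotateD W) = amalgShift E W := by
  unfold amalgShift
  by_cases hW : W = ∅
  · rw [if_pos (rotateD_eq_empty_iff.mpr hW), if_pos hW, neCell_rotateD, swCell_rotateD]
    apply Prod.ext <;> simp <;> ring
  · rw [if_neg (fun h => hW (rotateD_eq_empty_iff.mp h)), if_neg hW,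
      neCell_rotateD, swCell_rotateD, neCell_rotateD, swCell_rotateD]
    apply Prod.ext <;> simp <;> ring

lemma swCell_WswCopy {W : Finset Cell} (E : Finset Cell) (hW : W.Nonempty) :
    swCell (WswCopy W E) = swCell E := by
  unfold WswCopy
  rw [swCell_translateD hW]
  abel

lemma neCell_WneCopy {W : Finset Cell} (E : Finset Cell) (hW : W.Nonempty) :
    neCell (WneCopy W E) = neCell E := by
  unfold WneCopy
  rw [neCell_translateD hW]
  abel

lemma swCell_mem_WswCopy {W : Finset Cell} (E : Finset Cell) (hW : W.Nonempty) :
    swCell E ∈ WswCopy W E := by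
  rw [← swCell_WswCopy E hW]
  exact swCell_mem (translateD_nonempty hW)

lemma neCell_mem_WneCopy {W : Finset Cell} (E : Finset Cell) (hW : W.Nonempty) :
    neCell E ∈ WneCopy W E := by
  rw [← neCell_WneCopy E hW]
  exact neCell_mem (translateD_nonempty hW)

lemma WneCopy_eq_translate_WswCopy {E W : Finset Cell} (hW : W ≠ ∅) :
    WneCopy W E = translateD (amalgShift E W) (WswCopy W E) := by
  unfold WneCopy WswCopy
  rw [translateD_translateD]
  congr 1
  rw [amalgShift, if_neg hW]
  abel

lemma IsWOW.rot {E W : Finset Cell} (h : IsWOW E W) : IsWOW (rotateD E) (rotateD W) := by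
  obtain ⟨hEskew, hEconn, hTop, hBot⟩ := h
  refine ⟨hEskew.rot, hEconn.rot, ?_, ?_⟩
  · rcases hBot with rfl | ⟨hWskew, hWconn, hsub⟩
    · exact Or.inl (by simp)
    · exact Or.inr ⟨hWskew.rot, hWconn.rot, by rw [WneCopy_rot]; exact rotateD_subset hsub⟩
  · rcases hTop with rfl | ⟨hWskew, hWconn, hsub⟩
    · exact Or.inl (by simp)
    · exact Or.inr ⟨hWskew.rot, hWconn.rot, by rw [WswCopy_rot]; exact rotateD_subset hsub⟩

lemma HypII.rot {E W : Finset Cell} (h : HypII E W) : HypII (rotateD E) (rotateD W) := by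
  obtain ⟨t, h1, h2⟩ := h
  refine ⟨-t, fun x hx => ?_, fun x hx => ?_⟩
  · rw [WswCopy_rot, mem_rotateD] at hx
    have := h2 _ hx
    simp only at this
    omega
  · rw [WneCopy_rot, mem_rotateD] at hx
    have := h1 _ hx
    simp only at this
    omega

lemma HypIII.rot {E W : Finset Cell} (h : HypIII E W) : HypIII (rotateD E) (rotateD W) := by
  obtain ⟨ha, hb, hc, hd⟩ := h
  rw [HypIII, WneCopy_rot, WswCopy_rot, ← rotateD_sdiff, ← rotateD_sdiff]
  exact ⟨hc.rot, hd.rot, ha.rot, hb.rot⟩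

lemma Odiag_nonempty {E W : Finset Cell} (hWOW : IsWOW E W) (h2 : HypII E W)
    (hW : W ≠ ∅) : (Odiag E W).Nonempty := by
  obtain ⟨hEskew, hEconn, hTop, hBot⟩ := hWOW
  rcases hTop with rfl | ⟨hWskew, hWconn, hne⟩
  · exact absurd rfl hW
  rcases hBot with rfl | ⟨-, -, hsw⟩
  · exact absurd rfl hW
  have hWne : W.Nonempty := Finset.nonempty_iff_ne_empty.mpr hW
  obtain ⟨t, hts, htn⟩ := h2
  have ha : swCell E ∈ WswCopy W E := swCell_mem_WswCopy E hWne
  have hb : neCell E ∈ WneCopy W E := neCell_mem_WneCopy E hWne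
  have hta := hts _ ha
  have htb := htn _ hb
  obtain ⟨z, hz, hzc⟩ := content_ivt (t := t) (hEconn.2 _ (hsw ha) _ (hne hb)) (hsw ha)
    (by omega) (by omega)
  refine ⟨z, Finset.mem_sdiff.mpr ⟨hz, fun hmem => ?_⟩⟩
  rcases Finset.mem_union.mp hmem with hz1 | hz1
  · have := htn _ hz1; omega
  · have := hts _ hz1; omega

lemma not_LH_LV {E W : Finset Cell} (hWOW : IsWOW E W) (h2 : HypII E W) :
    ¬ (LowerHoriz E W ∧ LowerVert E W) := by
  rintro ⟨hLH, hLV⟩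
  by_cases hW : W = ∅
  · rw [LowerHoriz, hW, WswCopy_empty] at hLH
    simp at hLH
  · have hO := Odiag_nonempty hWOW h2 hW
    have ho := swCell_mem hO
    have hWskew : IsSkewDiagram (WswCopy W E) := by
      obtain ⟨-, -, -, hBot⟩ := hWOW
      rcases hBot with rfl | ⟨hWskew, -, -⟩
      · exact absurd rfl hW
      · exact hWskew.translate _
    have := skew_corner_sw hWskew hLH hLV
    rw [Odiag] at ho
    rw [Finset.mem_sdiff] at ho
    exact ho.2 (Finset.mem_union.mpr (Or.inr this))

lemma not_UH_UV {E W : Finset Cell} (hWOW : IsWOW E W) (h2 : HypII E W) :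
    ¬ (UpperHoriz E W ∧ UpperVert E W) := by
  rintro ⟨hUH, hUV⟩
  by_cases hW : W = ∅
  · rw [UpperHoriz, hW, WneCopy_empty] at hUH
    simp at hUH
  · have hO := Odiag_nonempty hWOW h2 hW
    have ho := neCell_mem hO
    have hWskew : IsSkewDiagram (WneCopy W E) := by
      obtain ⟨-, -, hTop, -⟩ := hWOW
      rcases hTop with rfl | ⟨hWskew, -, -⟩
      · exact absurd rfl hW
      · exact hWskew.translate _
    have := skew_corner_ne hWskew hUV hUH
    rw [Odiag] at ho
    rw [Finset.mem_sdiff] at ho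
    exact ho.2 (Finset.mem_union.mpr (Or.inl this))

lemma attach_lower {E W : Finset Cell} (hWOW : IsWOW E W) (h2 : HypII E W)
    (h3 : HypIII E W) (hW : W ≠ ∅) : LowerHoriz E W ∨ LowerVert E W := by
  have hO := Odiag_nonempty hWOW h2 hW
  obtain ⟨hEskew, hEconn, hTop, hBot⟩ := hWOW
  rcases hBot with rfl | ⟨hWskew, hWconn, hswsub⟩
  · exact absurd rfl hW
  have hWne : W.Nonempty := Finset.nonempty_iff_ne_empty.mpr hW
  obtain ⟨t, hts, htn⟩ := h2
  have hdisj : ∀ x ∈ WswCopy W E, x ∉ WneCopy W E := by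
    intro x hx hx'
    have := hts x hx
    have := htn x hx'
    omega
  set F := E \ WneCopy W E with hF
  have hFskew := h3.1
  have hFconn := h3.2.1
  have hWswF : WswCopy W E ⊆ F := fun x hx =>
    Finset.mem_sdiff.mpr ⟨hswsub hx, hdisj x hx⟩
  have hOF : Odiag E W ⊆ F := by
    intro x hx
    rw [Odiag, Finset.mem_sdiff] at hx
    exact Finset.mem_sdiff.mpr ⟨hx.1, fun h => hx.2 (Finset.mem_union.mpr (Or.inl h))⟩
  have hspec := swCell_isSW hO
  set o := swCell (Odiag E W) with hodef
  by_contra hcon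
  push_neg at hcon
  obtain ⟨hnLH, hnLV⟩ := hcon
  have hFsplit : ∀ x ∈ F, x ∈ WswCopy W E ∨ x ∈ Odiag E W := by
    intro x hx
    rw [hF, Finset.mem_sdiff] at hx
    by_cases hxw : x ∈ WswCopy W E
    · exact Or.inl hxw
    · refine Or.inr (Finset.mem_sdiff.mpr ⟨hx.1, fun h => ?_⟩)
      rcases Finset.mem_union.mp h with h | h
      · exact hx.2 h
      · exact hxw h
  have hwmem : ((o.1, o.2 - 1) : Cell) ∉ F := by
    intro h
    rcases hFsplit _ h with h | h
    · exact hnLH h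
    · have h2 : o.2 ≤ o.2 - 1 := (hspec.2 _ h).2 rfl
      omega
  have hsmem : ((o.1 + 1, o.2) : Cell) ∉ F := by
    intro h
    rcases hFsplit _ h with h | h
    · exact hnLV h
    · have h1 : o.1 + 1 ≤ o.1 := (hspec.2 _ h).1
      omega
  have hsw := sw_corner hFskew hFconn (hOF (swCell_mem hO)) hwmem hsmem
  have hswE : IsSW F (swCell E) := by
    refine ⟨hWswF (swCell_mem_WswCopy E hWne), fun c hc => ?_⟩
    exact (swCell_isSW hEconn.1).2 c (Finset.sdiff_subset hc)
  have heq : o = swCell E := hsw.unique hswE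
  have : o ∈ WswCopy W E := by
    rw [heq]
    exact swCell_mem_WswCopy E hWne
  have ho := swCell_mem hO
  rw [← hodef, Odiag, Finset.mem_sdiff] at ho
  exact ho.2 (Finset.mem_union.mpr (Or.inr this))

lemma attach_upper {E W : Finset Cell} (hWOW : IsWOW E W) (h2 : HypII E W)
    (h3 : HypIII E W) (hW : W ≠ ∅) : UpperHoriz E W ∨ UpperVert E W := by
  have := attach_lower hWOW.rot h2.rot h3.rot
    (fun h => hW (rotateD_eq_empty_iff.mp h))
  rcases this with h | h
  · exact Or.inl ((LowerHoriz_rot E W).mp h)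
  · exact Or.inr ((LowerVert_rot E W).mp h)

lemma case_abcd {E W : Finset Cell} (hWOW : IsWOW E W) (h2 : HypII E W)
    (h3 : HypIII E W) : CaseA E W ∨ CaseB E W ∨ CaseC E W ∨ CaseD E W := by
  by_cases hW : W = ∅
  · exact Or.inl (Or.inl hW)
  · rcases attach_lower hWOW h2 h3 hW with hL | hL <;>
      rcases attach_upper hWOW h2 h3 hW with hU | hU
    · exact Or.inl (Or.inr ⟨hL, hU⟩)
    · exact Or.inr (Or.inr (Or.inl ⟨hW, hL, hU⟩))
    · exact Or.inr (Or.inr (Or.inr ⟨hW, hL, hU⟩))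
    · exact Or.inr (Or.inl ⟨hW, hL, hU⟩)

end Copies
section HypITransfer

lemma contents_rot (S : Finset Cell) :
    (rotateD S).image (fun c => c.2 - c.1) =
      (S.image (fun c => c.2 - c.1)).image (fun x => -x) := by
  ext t
  simp only [Finset.mem_image, mem_rotateD]
  constructor
  · rintro ⟨c, hc, rfl⟩
    exact ⟨-(c.2 - c.1), ⟨(-c.1, -c.2), hc, by simp; ring⟩, by ring⟩
  · rintro ⟨x, ⟨c, hc, rfl⟩, rfl⟩
    exact ⟨(-c.1, -c.2), by simpa using hc, by simp; ring⟩

lemma contents_translate (v : Cell) (S : Finset Cell) :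
    (translateD v S).image (fun c => c.2 - c.1) =
      (S.image (fun c => c.2 - c.1)).image (fun x => x + (v.2 - v.1)) := by
  ext t
  simp only [Finset.mem_image, mem_translateD]
  constructor
  · rintro ⟨c, hc, rfl⟩
    exact ⟨(c - v).2 - (c - v).1, ⟨c - v, hc, rfl⟩, by simp; ring⟩
  · rintro ⟨x, ⟨c, hc, rfl⟩, rfl⟩
    exact ⟨c + v, by simpa using hc, by simp; ring⟩

lemma WneCopy_eq_translate' (X E : Finset Cell) :
    WneCopy X E =
      translateD ((neCell E - neCell X) - (swCell E - swCell X)) (WswCopy X E) := by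
  unfold WneCopy WswCopy
  rw [translateD_translateD]
  congr 1
  abel

lemma cont_neCell_eq {Y₁ Y₂ : Finset Cell} (h1 : IsSkewDiagram Y₁) (h2 : IsSkewDiagram Y₂)
    (hn1 : Y₁.Nonempty) (hn2 : Y₂.Nonempty)
    (hc : Y₁.image (fun c => c.2 - c.1) = Y₂.image (fun c => c.2 - c.1)) :
    (neCell Y₁).2 - (neCell Y₁).1 = (neCell Y₂).2 - (neCell Y₂).1 := by
  have hm1 : (neCell Y₁).2 - (neCell Y₁).1 ∈ Y₂.image (fun c => c.2 - c.1) := by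
    rw [← hc]; exact Finset.mem_image_of_mem _ (neCell_mem hn1)
  have hm2 : (neCell Y₂).2 - (neCell Y₂).1 ∈ Y₁.image (fun c => c.2 - c.1) := by
    rw [hc]; exact Finset.mem_image_of_mem _ (neCell_mem hn2)
  obtain ⟨c1, hc1, hcc1⟩ := Finset.mem_image.mp hm1
  obtain ⟨c2, hc2, hcc2⟩ := Finset.mem_image.mp hm2
  have := content_le_neCell h2 hn2 hc1
  have := content_le_neCell h1 hn1 hc2
  omega

lemma HypI.rot {E W : Finset Cell} (hWOW : IsWOW E W) (h1 : HypI E W) :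
    HypI (rotateD E) (rotateD W) := by
  rintro ⟨W', hW'skew, hTop', hBot', hne', hsw', hconts⟩
  by_cases hW : W = ∅
  · rw [hW] at hne'
    simp only [rotateD_empty, WneCopy_empty] at hne' hconts
    rw [hW] at hconts
    simp only [rotateD_empty, WneCopy_empty, Finset.image_empty] at hconts
    rw [Finset.image_eq_empty.mp hconts] at hne'
    exact (ssubset_irrefl _) hne'
  -- W nonempty
  have hWn : W.Nonempty := Finset.nonempty_iff_ne_empty.mpr hW
  have hrWn : (rotateD W).Nonempty := rotateD_nonempty hWn
  have hWneR : (WneCopy (rotateD W) (rotateD E)).Nonempty := translateD_nonempty hrWn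
  have hW'copyn : (WneCopy W' (rotateD E)).Nonempty :=
    Finset.Nonempty.mono hne'.1 hWneR
  have hW'n : W'.Nonempty := by
    by_contra hcon
    rw [Finset.not_nonempty_iff_eq_empty] at hcon
    rw [hcon, WneCopy_empty] at hW'copyn
    exact Finset.not_nonempty_empty hW'copyn
  have hW'ne : W' ≠ ∅ := Finset.nonempty_iff_ne_empty.mp hW'n
  rcases hTop' with h | ⟨hW'skew2, hW'conn, hW'top⟩
  · exact hW'ne h
  rcases hBot' with h | ⟨-, -, hW'bot⟩
  · exact hW'ne h
  set W'' := rotateD W' with hW''def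
  have hid1 : WswCopy W'' E = rotateD (WneCopy W' (rotateD E)) := by
    have := WswCopy_rot W' (rotateD E)
    rwa [rotateD_rotateD] at this
  have hid2 : WneCopy W'' E = rotateD (WswCopy W' (rotateD E)) := by
    have := WneCopy_rot W' (rotateD E)
    rwa [rotateD_rotateD] at this
  have hid3 : WneCopy W E = rotateD (WswCopy (rotateD W) (rotateD E)) := by
    rw [WswCopy_rot, rotateD_rotateD]
  have hid4 : WswCopy W E = rotateD (WneCopy (rotateD W) (rotateD E)) := by
    rw [WneCopy_rot, rotateD_rotateD]
  apply h1
  refine ⟨W'', hW'skew.rot, ?_, ?_, ?_, ?_, ?_⟩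
  · refine Or.inr ⟨hW'skew.rot, hW'conn.rot, ?_⟩
    rw [hid2]
    have := rotateD_subset hW'bot
    rwa [rotateD_rotateD] at this
  · refine Or.inr ⟨hW'skew.rot, hW'conn.rot, ?_⟩
    rw [hid1]
    have := rotateD_subset hW'top
    rwa [rotateD_rotateD] at this
  · rw [hid3, hid2]
    exact rotateD_ssubset hsw'
  · rw [hid4, hid1]
    exact rotateD_ssubset hne'
  -- contents
  · have hswconts : (WswCopy W'' E).image (fun c => c.2 - c.1) =
        (WswCopy W E).image (fun c => c.2 - c.1) := by
      rw [hid1, hid4, contents_rot, contents_rot, hconts]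
    -- skewness of the sw copies
    have hWskew : IsSkewDiagram W := by
      obtain ⟨-, -, -, hBot⟩ := hWOW
      rcases hBot with h | ⟨hs, -, -⟩
      · exact absurd h hW
      · exact hs
    have hY1skew : IsSkewDiagram (WswCopy W'' E) := (hW'skew.rot).translate _
    have hY2skew : IsSkewDiagram (WswCopy W E) := hWskew.translate _
    have hY1n : (WswCopy W'' E).Nonempty := translateD_nonempty (rotateD_nonempty hW'n)
    have hY2n : (WswCopy W E).Nonempty := translateD_nonempty hWn
    have hmax := cont_neCell_eq hY1skew hY2skew hY1n hY2n hswconts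
    have hne1 : neCell (WswCopy W'' E) = neCell W'' + (swCell E - swCell W'') :=
      neCell_translateD (rotateD_nonempty hW'n) _
    have hne2 : neCell (WswCopy W E) = neCell W + (swCell E - swCell W) :=
      neCell_translateD hWn _
    rw [hne1, hne2] at hmax
    simp only [Prod.fst_add, Prod.snd_add, Prod.fst_sub, Prod.snd_sub] at hmax
    rw [WneCopy_eq_translate' W'' E, WneCopy_eq_translate' W E,
      contents_translate, contents_translate, hswconts]
    congr 1
    funext x
    simp only [Prod.fst_sub, Prod.snd_sub]
    omega

end HypITransfer
section Depth

lemma cell_neg_inj : Function.Injective (fun c : Cell => ((-c.1, -c.2) : Cell)) := by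
  intro a b h
  simp only [Prod.ext_iff] at h
  exact Prod.ext (by omega) (by omega)

lemma card_rotateD (S : Finset Cell) : (rotateD S).card = S.card :=
  Finset.card_image_of_injective _ cell_neg_inj

lemma filter_card_rot (D : Finset Cell) (P Q : Cell → Prop) [DecidablePred P]
    [DecidablePred Q] (h : ∀ c, Q c ↔ P (-c.1, -c.2)) :
    ((rotateD D).filter Q).card = (D.filter P).card := by
  have hset : (rotateD D).filter Q = rotateD (D.filter P) := by
    ext x
    simp only [Finset.mem_filter, mem_rotateD]
    constructor
    · rintro ⟨h1, h2⟩
      exact ⟨h1, (h x).mp h2⟩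
    · rintro ⟨h1, h2⟩
      exact ⟨h1, (h x).mpr h2⟩
  rw [hset, card_rotateD]

lemma depthNW_rot (D : Finset Cell) (d : Cell) :
    depthNW (rotateD D) (-d.1, -d.2) = depthSE D d := by
  unfold depthNW depthSE
  exact filter_card_rot D _ _
    (fun c => by constructor <;> rintro ⟨h1, h2⟩ <;> exact ⟨by omega, by omega⟩)

lemma depthSE_rot (D : Finset Cell) (d : Cell) :
    depthSE (rotateD D) (-d.1, -d.2) = depthNW D d := by
  unfold depthNW depthSE
  exact filter_card_rot D _ _
    (fun c => by constructor <;> rintro ⟨h1, h2⟩ <;> exact ⟨by omega, by omega⟩)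

end Depth

section PlaceVec

lemma case_exclusions {E W : Finset Cell}
    (hLL : ¬(LowerHoriz E W ∧ LowerVert E W))
    (hUU : ¬(UpperHoriz E W ∧ UpperVert E W)) :
    (¬(CaseA E W ∧ CaseB E W)) ∧ (¬(CaseA E W ∧ CaseC E W)) ∧
    (¬(CaseA E W ∧ CaseD E W)) ∧ (¬(CaseB E W ∧ CaseC E W)) ∧
    (¬(CaseB E W ∧ CaseD E W)) ∧ (¬(CaseC E W ∧ CaseD E W)) := by
  refine ⟨?_, ?_, ?_, ?_, ?_, ?_⟩
  · rintro ⟨hA, hB⟩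
    rcases hA with h | h
    · exact hB.1 h
    · exact hLL ⟨h.1, hB.2.1⟩
  · rintro ⟨hA, hC⟩
    rcases hA with h | h
    · exact hC.1 h
    · exact hUU ⟨h.2, hC.2.2⟩
  · rintro ⟨hA, hD⟩
    rcases hA with h | h
    · exact hD.1 h
    · exact hLL ⟨h.1, hD.2.1⟩
  · rintro ⟨hB, hC⟩
    exact hLL ⟨hC.2.1, hB.2.1⟩
  · rintro ⟨hB, hD⟩
    exact hUU ⟨hD.2.2, hB.2.2⟩
  · rintro ⟨hC, hD⟩
    exact hLL ⟨hC.2.1, hD.2.1⟩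

lemma placeVec_rot (D E W : Finset Cell)
    (hLL : ¬(LowerHoriz E W ∧ LowerVert E W))
    (hUU : ¬(UpperHoriz E W ∧ UpperVert E W))
    (hcase : CaseA E W ∨ CaseB E W ∨ CaseC E W ∨ CaseD E W) (d : Cell) :
    placeVec (rotateD D) (rotateD E) (rotateD W) (-d.1, -d.2) =
      (-(placeVec D E W d).1, -(placeVec D E W d).2) := by
  obtain ⟨hAB, hAC, hAD, hBC, hBD, hCD⟩ := case_exclusions hLL hUU
  simp only [placeVec, amalgShift_rot, CaseA_rot, CaseB_rot, CaseC_rot, CaseD_rot,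
    depthNW_rot, depthSE_rot]
  rcases hcase with hA | hB | hC | hD
  · rw [if_pos hA, if_pos hA]
    apply Prod.ext <;> simp <;> ring
  · have hnA : ¬ CaseA E W := fun h => hAB ⟨h, hB⟩
    rw [if_neg hnA, if_neg hnA, if_pos hB, if_pos hB]
    apply Prod.ext <;> simp <;> ring
  · have hnA : ¬ CaseA E W := fun h => hAC ⟨h, hC⟩
    have hnB : ¬ CaseB E W := fun h => hBC ⟨h, hC⟩
    have hnD : ¬ CaseD E W := fun h => hCD ⟨hC, h⟩
    rw [if_neg hnA, if_neg hnA, if_neg hnB, if_neg hnB, if_neg hnD, if_pos hC]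
    apply Prod.ext <;> simp <;> ring
  · have hnA : ¬ CaseA E W := fun h => hAD ⟨h, hD⟩
    have hnB : ¬ CaseB E W := fun h => hBD ⟨h, hD⟩
    have hnC : ¬ CaseC E W := fun h => hCD ⟨h, hD⟩
    rw [if_neg hnA, if_neg hnA, if_neg hnB, if_neg hnB, if_pos hD, if_neg hnC]
    apply Prod.ext <;> simp <;> ring

end PlaceVec
section Compose

lemma rotateD_biUnion (s : Finset Cell) (t : Cell → Finset Cell) :
    rotateD (s.biUnion t) = s.biUnion (fun a => rotateD (t a)) :=
  Finset.biUnion_image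

lemma biUnion_rot_index (s : Finset Cell) (t : Cell → Finset Cell) :
    (rotateD s).biUnion t = s.biUnion (fun a => t (-a.1, -a.2)) :=
  Finset.image_biUnion

lemma filter_rot_index (s : Finset Cell) (p : Cell → Prop) [DecidablePred p] :
    (rotateD s).filter p = rotateD (s.filter (fun a => p (-a.1, -a.2))) := by
  ext x
  simp only [Finset.mem_filter, mem_rotateD]
  constructor
  · rintro ⟨h1, h2⟩
    refine ⟨h1, ?_⟩
    simpa using h2
  · rintro ⟨h1, h2⟩
    refine ⟨h1, ?_⟩
    simpa using h2

lemma translateD_cancel (s : Cell) (Y : Finset Cell) :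
    translateD (-s) (translateD s Y) = Y := by
  rw [translateD_translateD]
  have h : -s + s = ((0 : ℤ), (0 : ℤ)) := by apply Prod.ext <;> simp
  rw [h, translateD_zero]

lemma Wsw_eq_translate_Wne {E W : Finset Cell} (hW : W ≠ ∅) :
    WswCopy W E = translateD (-(amalgShift E W)) (WneCopy W E) := by
  conv_rhs => rw [WneCopy_eq_translate_WswCopy hW]
  rw [translateD_cancel]

lemma extra_reindex {A1 A2 : Finset Cell} {f1 f2 : Cell → Finset Cell}
    (h1 : ∀ d ∈ A1, ((d.1 - 1, d.2) : Cell) ∈ A2 ∧ f1 d = f2 (d.1 - 1, d.2))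
    (h2 : ∀ y ∈ A2, ((y.1 + 1, y.2) : Cell) ∈ A1 ∧ f2 y = f1 (y.1 + 1, y.2)) :
    A1.biUnion f1 = A2.biUnion f2 := by
  ext x
  simp only [Finset.mem_biUnion]
  constructor
  · rintro ⟨d, hd, hx⟩
    exact ⟨_, (h1 d hd).1, by rw [← (h1 d hd).2]; exact hx⟩
  · rintro ⟨y, hy, hx⟩
    exact ⟨_, (h2 y hy).1, by rw [← (h2 y hy).2]; exact hx⟩

lemma pv_north_C {D E W : Finset Cell} (hnA : ¬ CaseA E W) (hnB : ¬ CaseB E W)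
    (hC : CaseC E W) {d : Cell} (hdep : depthNW D (d.1 - 1, d.2) = depthNW D d) :
    placeVec D E W (d.1 - 1, d.2) = placeVec D E W d + amalgShift E W := by
  simp only [placeVec, if_neg hnA, if_neg hnB, if_pos hC, hdep]
  apply Prod.ext <;> simp <;> ring

lemma pv_north_D {D E W : Finset Cell} (hnA : ¬ CaseA E W) (hnB : ¬ CaseB E W)
    (hnC : ¬ CaseC E W) {d : Cell} (hdep : depthSE D (d.1 - 1, d.2) = depthSE D d) :
    placeVec D E W (d.1 - 1, d.2) = placeVec D E W d + amalgShift E W := by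
  simp only [placeVec, if_neg hnA, if_neg hnB, if_neg hnC, hdep]
  apply Prod.ext <;> simp <;> ring

lemma composeWE_rot (D E W : Finset Cell)
    (hLL : ¬(LowerHoriz E W ∧ LowerVert E W))
    (hUU : ¬(UpperHoriz E W ∧ UpperVert E W))
    (hcase : CaseA E W ∨ CaseB E W ∨ CaseC E W ∨ CaseD E W) :
    rotateD (composeWE D E W) = composeWE (rotateD D) (rotateD E) (rotateD W) := by
  obtain ⟨hAB, hAC, hAD, hBC, hBD, hCD⟩ := case_exclusions hLL hUU
  by_cases hD : D = ∅
  · rw [composeWE, composeWE, if_pos hD, if_pos (rotateD_eq_empty_iff.mpr hD)]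
  · have hrD : ¬ rotateD D = ∅ := fun h => hD (rotateD_eq_empty_iff.mp h)
    rw [composeWE, composeWE, if_neg hD, if_neg hrD, rotateD_union]
    have hmain : rotateD (D.biUnion fun d => translateD (placeVec D E W d) E) =
        (rotateD D).biUnion fun d =>
          translateD (placeVec (rotateD D) (rotateD E) (rotateD W) d) (rotateD E) := by
      rw [rotateD_biUnion, biUnion_rot_index]
      apply Finset.biUnion_congr rfl
      intro d hd
      rw [rotateD_translateD, placeVec_rot D E W hLL hUU hcase d]
      rfl
    rw [hmain]
    congr 1
    -- the extra copies of W
    rcases hcase with hA | hB | hC | hD'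
    · have hnC : ¬ CaseC E W := fun h => hAC ⟨hA, h⟩
      have hnD : ¬ CaseD E W := fun h => hAD ⟨hA, h⟩
      have hnC' : ¬ CaseC (rotateD E) (rotateD W) := fun h => hnD ((CaseC_rot E W).mp h)
      have hnD' : ¬ CaseD (rotateD E) (rotateD W) := fun h => hnC ((CaseD_rot E W).mp h)
      rw [extraWs, extraWs, if_neg hnC, if_neg hnD, if_neg hnC', if_neg hnD', rotateD_empty]
    · have hnC : ¬ CaseC E W := fun h => hBC ⟨hB, h⟩
      have hnD : ¬ CaseD E W := fun h => hBD ⟨hB, h⟩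
      have hnC' : ¬ CaseC (rotateD E) (rotateD W) := fun h => hnD ((CaseC_rot E W).mp h)
      have hnD' : ¬ CaseD (rotateD E) (rotateD W) := fun h => hnC ((CaseD_rot E W).mp h)
      rw [extraWs, extraWs, if_neg hnC, if_neg hnD, if_neg hnC', if_neg hnD', rotateD_empty]
    -- Case C : the rotated diagram is in case D
    · have hnA : ¬ CaseA E W := fun h => hAC ⟨h, hC⟩
      have hnB : ¬ CaseB E W := fun h => hBC ⟨h, hC⟩
      have hnD : ¬ CaseD E W := fun h => hCD ⟨hC, h⟩
      have hnC' : ¬ CaseC (rotateD E) (rotateD W) := fun h => hnD ((CaseC_rot E W).mp h)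
      have hD'' : CaseD (rotateD E) (rotateD W) := (CaseD_rot E W).mpr hC
      have hW : W ≠ ∅ := hC.1
      have hrW : rotateD W ≠ ∅ := fun h => hW (rotateD_eq_empty_iff.mp h)
      rw [extraWs, extraWs, if_pos hC, if_neg hnC', if_pos hD'']
      rw [rotateD_biUnion, filter_rot_index, biUnion_rot_index]
      have hWne' : rotateD (WneCopy W E) = WswCopy (rotateD W) (rotateD E) :=
        (WswCopy_rot W E).symm
      have hWsw' : WswCopy (rotateD W) (rotateD E) =
          translateD (-(amalgShift E W)) (WneCopy (rotateD W) (rotateD E)) := by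
        rw [Wsw_eq_translate_Wne hrW, amalgShift_rot]
      have hset : ∀ s e : Cell, e.1 = -(s.1 - 1) → e.2 = -s.2 →
          depthNW D (s.1 - 1, s.2) = depthNW D s →
          rotateD (translateD (placeVec D E W s + (1, 1)) (WneCopy W E)) =
          translateD (placeVec (rotateD D) (rotateD E) (rotateD W) e - (1, 1))
            (WneCopy (rotateD W) (rotateD E)) := by
        intro s e he1 he2 hdep
        have he : e = ((-(s.1 - 1), -s.2) : Cell) := Prod.ext he1 he2
        rw [he, rotateD_translateD, hWne', hWsw', translateD_translateD,
          placeVec_rot D E W hLL hUU (Or.inr (Or.inr (Or.inl hC))) (s.1 - 1, s.2),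
          pv_north_C hnA hnB hC hdep]
        congr 1
        apply Prod.ext <;> simp <;> ring
      apply extra_reindex
      · intro d hd
        rw [Finset.mem_filter] at hd
        obtain ⟨hdD, hdn, hdep⟩ := hd
        constructor
        · rw [Finset.mem_filter]
          refine ⟨hdn, ?_, ?_⟩
          · have h0 : ((-(d.1 - 1) - 1, -d.2) : Cell) ∈ rotateD D := by
              rw [mem_rotateD]
              convert hdD using 2 <;> omega
            exact h0
          · have e1 : depthSE (rotateD D) (-(d.1 - 1), -d.2) = depthNW D (d.1 - 1, d.2) :=
              depthSE_rot D (d.1 - 1, d.2)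
            have e2 : depthSE (rotateD D) (-d.1, -d.2) = depthNW D d := depthSE_rot D d
            have hc2 : ((-(d.1 - 1) - 1, -d.2) : Cell) = ((-d.1, -d.2) : Cell) := by
              apply Prod.ext <;> (simp; try ring)
            show depthSE (rotateD D) (-(d.1 - 1), -d.2) =
              depthSE (rotateD D) (-(d.1 - 1) - 1, -d.2)
            rw [e1, ← hdep, hc2, e2]
        · exact hset d _ rfl rfl hdep.symm
      · intro y hy
        rw [Finset.mem_filter] at hy
        obtain ⟨hyD, hy1, hy2⟩ := hy
        have hsD : ((y.1 + 1, y.2) : Cell) ∈ D := by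
          have h0 : ((-y.1 - 1, -y.2) : Cell) ∈ rotateD D := hy1
          rw [mem_rotateD] at h0
          convert h0 using 2 <;> omega
        have hyy : ((y.1 + 1 - 1, y.2) : Cell) = y := by
          apply Prod.ext <;> simp
        have hdepy : depthNW D ((y.1 + 1 : ℤ), y.2) = depthNW D y := by
          have e1 : depthSE (rotateD D) (-(y.1 + 1), -y.2) = depthNW D (y.1 + 1, y.2) :=
            depthSE_rot D (y.1 + 1, y.2)
          have e2 : depthSE (rotateD D) (-y.1, -y.2) = depthNW D y := depthSE_rot D y
          have hc2 : ((-(y.1 + 1), -y.2) : Cell) = ((-y.1 - 1, -y.2) : Cell) := by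
            apply Prod.ext <;> (simp; try ring)
          rw [← e2, ← e1, hc2]
          exact hy2.symm
        have hdeps : depthNW D (((y.1 + 1 : ℤ), y.2).1 - 1, ((y.1 + 1 : ℤ), y.2).2) =
            depthNW D ((y.1 + 1 : ℤ), y.2) := by
          show depthNW D ((y.1 + 1 - 1 : ℤ), y.2) = _
          rw [hyy, hdepy]
        constructor
        · rw [Finset.mem_filter]
          refine ⟨hsD, ?_, ?_⟩
          · show ((y.1 + 1 - 1, y.2) : Cell) ∈ D
            rw [hyy]; exact hyD
          · show depthNW D ((y.1 + 1 : ℤ), y.2) = depthNW D ((y.1 + 1 - 1 : ℤ), y.2)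
            rw [hyy, hdepy]
        · exact (hset ((y.1 + 1 : ℤ), y.2) (-y.1, -y.2) (by omega) (by omega) hdeps).symm
    -- Case D : the rotated diagram is in case C
    · have hnA : ¬ CaseA E W := fun h => hAD ⟨h, hD'⟩
      have hnB : ¬ CaseB E W := fun h => hBD ⟨h, hD'⟩
      have hnC : ¬ CaseC E W := fun h => hCD ⟨h, hD'⟩
      have hC'' : CaseC (rotateD E) (rotateD W) := (CaseC_rot E W).mpr hD'
      have hW : W ≠ ∅ := hD'.1
      have hrW : rotateD W ≠ ∅ := fun h => hW (rotateD_eq_empty_iff.mp h)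
      rw [extraWs, extraWs, if_neg hnC, if_pos hD', if_pos hC'']
      rw [rotateD_biUnion, filter_rot_index, biUnion_rot_index]
      have hWne' : rotateD (WneCopy W E) = WswCopy (rotateD W) (rotateD E) :=
        (WswCopy_rot W E).symm
      have hWsw' : WswCopy (rotateD W) (rotateD E) =
          translateD (-(amalgShift E W)) (WneCopy (rotateD W) (rotateD E)) := by
        rw [Wsw_eq_translate_Wne hrW, amalgShift_rot]
      have hset : ∀ s e : Cell, e.1 = -(s.1 - 1) → e.2 = -s.2 →
          depthSE D (s.1 - 1, s.2) = depthSE D s →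
          rotateD (translateD (placeVec D E W s - (1, 1)) (WneCopy W E)) =
          translateD (placeVec (rotateD D) (rotateD E) (rotateD W) e + (1, 1))
            (WneCopy (rotateD W) (rotateD E)) := by
        intro s e he1 he2 hdep
        have he : e = ((-(s.1 - 1), -s.2) : Cell) := Prod.ext he1 he2
        rw [he, rotateD_translateD, hWne', hWsw', translateD_translateD,
          placeVec_rot D E W hLL hUU (Or.inr (Or.inr (Or.inr hD'))) (s.1 - 1, s.2),
          pv_north_D hnA hnB hnC hdep]
        congr 1
        apply Prod.ext <;> simp <;> ring
      apply extra_reindex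
      · intro d hd
        rw [Finset.mem_filter] at hd
        obtain ⟨hdD, hdn, hdep⟩ := hd
        constructor
        · rw [Finset.mem_filter]
          refine ⟨hdn, ?_, ?_⟩
          · have h0 : ((-(d.1 - 1) - 1, -d.2) : Cell) ∈ rotateD D := by
              rw [mem_rotateD]
              convert hdD using 2 <;> omega
            exact h0
          · have e1 : depthNW (rotateD D) (-(d.1 - 1), -d.2) = depthSE D (d.1 - 1, d.2) :=
              depthNW_rot D (d.1 - 1, d.2)
            have e2 : depthNW (rotateD D) (-d.1, -d.2) = depthSE D d := depthNW_rot D d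
            have hc2 : ((-(d.1 - 1) - 1, -d.2) : Cell) = ((-d.1, -d.2) : Cell) := by
              apply Prod.ext <;> (simp; try ring)
            show depthNW (rotateD D) (-(d.1 - 1), -d.2) =
              depthNW (rotateD D) (-(d.1 - 1) - 1, -d.2)
            rw [e1, ← hdep, hc2, e2]
        · exact hset d _ rfl rfl hdep.symm
      · intro y hy
        rw [Finset.mem_filter] at hy
        obtain ⟨hyD, hy1, hy2⟩ := hy
        have hsD : ((y.1 + 1, y.2) : Cell) ∈ D := by
          have h0 : ((-y.1 - 1, -y.2) : Cell) ∈ rotateD D := hy1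
          rw [mem_rotateD] at h0
          convert h0 using 2 <;> omega
        have hyy : ((y.1 + 1 - 1, y.2) : Cell) = y := by
          apply Prod.ext <;> simp
        have hdepy : depthSE D ((y.1 + 1 : ℤ), y.2) = depthSE D y := by
          have e1 : depthNW (rotateD D) (-(y.1 + 1), -y.2) = depthSE D (y.1 + 1, y.2) :=
            depthNW_rot D (y.1 + 1, y.2)
          have e2 : depthNW (rotateD D) (-y.1, -y.2) = depthSE D y := depthNW_rot D y
          have hc2 : ((-(y.1 + 1), -y.2) : Cell) = ((-y.1 - 1, -y.2) : Cell) := by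
            apply Prod.ext <;> (simp; try ring)
          rw [← e2, ← e1, hc2]
          exact hy2.symm
        have hdeps : depthSE D (((y.1 + 1 : ℤ), y.2).1 - 1, ((y.1 + 1 : ℤ), y.2).2) =
            depthSE D ((y.1 + 1 : ℤ), y.2) := by
          show depthSE D ((y.1 + 1 - 1 : ℤ), y.2) = _
          rw [hyy, hdepy]
        constructor
        · rw [Finset.mem_filter]
          refine ⟨hsD, ?_, ?_⟩
          · show ((y.1 + 1 - 1, y.2) : Cell) ∈ D
            rw [hyy]; exact hyD
          · show depthSE D ((y.1 + 1 : ℤ), y.2) = depthSE D ((y.1 + 1 - 1 : ℤ), y.2)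
            rw [hyy, hdepy]
        · exact (hset ((y.1 + 1 : ℤ), y.2) (-y.1, -y.2) (by omega) (by omega) hdeps).symm

end Compose
/-- For connected skew diagrams `D` and `E = WOW` satisfying Hypotheses (I)–(III),
one has `(D ∘_W E)^* = D^* ∘_{W^*} E^*` up to translation; moreover the antipodal
rotation `E^*` equals `W^*O^*W^*` (its `O` being the rotation of `O`, up to
translation) and again satisfies Hypotheses (I)–(III). -/
theorem composition_antipodal_rotation
    (D E W : Finset Cell)
    (hDskew : IsSkewDiagram D) (hDconn : IsConnectedDiagram D)
    (hWOW : IsWOW E W)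
    (h1 : HypI E W) (h2 : HypII E W) (h3 : HypIII E W) :
    (∃ v : Cell, translateD v (rotateD (composeWE D E W)) =
        composeWE (rotateD D) (rotateD E) (rotateD W)) ∧
    IsWOW (rotateD E) (rotateD W) ∧
    (∃ v : Cell, translateD v (rotateD (Odiag E W)) = Odiag (rotateD E) (rotateD W)) ∧
    HypI (rotateD E) (rotateD W) ∧ HypII (rotateD E) (rotateD W) ∧
    HypIII (rotateD E) (rotateD W) := by
  have hLL := not_LH_LV hWOW h2
  have hUU := not_UH_UV hWOW h2
  have hcase := case_abcd hWOW h2 h3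
  refine ⟨⟨(0, 0), ?_⟩, hWOW.rot, ⟨(0, 0), ?_⟩, HypI.rot hWOW h1, h2.rot, h3.rot⟩
  · rw [translateD_zero, composeWE_rot D E W hLL hUU hcase]
  · rw [translateD_zero, Odiag_rot]
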